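/- Let g : G → P be an injective S-linear map whose cokernel is annihilated by ω (i.e., ω • p ∈ range g for every p ∈ P). Then there exists a unique S-linear map g_Σ : P → G such that g ∘ g_Σ = ω·id_P; moreover this g_Σ also satisfies g_Σ ∘ g = ω·id_G, and the cokernel of g_Σ is annihilated by ω (i.e., ω • x ∈ range g_Σ for every x ∈ G). (Lemma 2.10 of the paper.) -/

import Mathlib

/-- Lemma 2.10.
Let `g : G → P` be an injective `S`-linear map whose cokernel is annihilated by
`ω` (i.e. `ω • p ∈ range g` for every `p`).  Then there is a unique `S`-linear
map `g_Σ : P → G` with `g ∘ g_Σ = ω · id_P`; moreover this `g_Σ` satisfies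
`g_Σ ∘ g = ω · id_G` and its cokernel is annihilated by `ω`. -/
theorem stmt_1
    {S : Type*} [CommRing S] [IsNoetherianRing S] [IsLocalRing S]
    (ω : S) (hω_mem : ω ∈ IsLocalRing.maximalIdeal S) (hω : ω ∈ nonZeroDivisors S)
    {G P : Type*}
    [AddCommGroup G] [Module S G] [Module.Finite S G]
    [AddCommGroup P] [Module S P] [Module.Finite S P]
    (g : G →ₗ[S] P) (hg : Function.Injective g)
    (hcoker : ∀ p : P, ω • p ∈ LinearMap.range g) :
    (∃! gSig : P →ₗ[S] G, g.comp gSig = ω • (LinearMap.id : P →ₗ[S] P)) ∧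
    (∀ gSig : P →ₗ[S] G, g.comp gSig = ω • (LinearMap.id : P →ₗ[S] P) →
      gSig.comp g = ω • (LinearMap.id : G →ₗ[S] G) ∧
      ∀ x : G, ω • x ∈ LinearMap.range gSig) := by
  classical
  choose f hf using hcoker
  have hadd : ∀ p q : P, f (p + q) = f p + f q := by
    intro p q
    apply hg
    rw [map_add, hf, hf, hf, smul_add]
  have hsmul : ∀ (c : S) (p : P), f (c • p) = c • f p := by
    intro c p
    apply hg
    rw [map_smul, hf, hf, smul_comm]
  let F : P →ₗ[S] G := ⟨⟨f, fun p q => hadd p q⟩, fun c p => hsmul c p⟩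
  have hF : g.comp F = ω • (LinearMap.id : P →ₗ[S] P) := by
    ext p; simpa [F] using hf p
  constructor
  · refine ⟨F, hF, ?_⟩
    intro h hh
    ext p
    apply hg
    have := LinearMap.congr_fun hh p
    have := LinearMap.congr_fun hF p
    simp only [LinearMap.comp_apply] at *
    simp_all
  · intro gSig hSig
    constructor
    · ext x
      apply hg
      have h1 := LinearMap.congr_fun hSig (g x)
      simp only [LinearMap.comp_apply, LinearMap.smul_apply, LinearMap.id_apply] at h1 ⊢
      rw [h1, map_smul]
    · intro x
      refine ⟨g x, ?_⟩
      apply hg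
      have h1 := LinearMap.congr_fun hSig (g x)
      simp only [LinearMap.comp_apply, LinearMap.smul_apply, LinearMap.id_apply] at h1 ⊢
      rw [h1, map_smul]
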